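/- Let R be a commutative ring, S a finite type, M an S×S matrix over R, and s₀ ∈ S. Let E be the S×S matrix over R whose (s₀,s₀) entry is 1 and all other entries are 0. In R[[D]], define W to be the (s₀,s₀) entry of (I − D·M)⁻¹ and W_f to be the (s₀,s₀) entry of (I − D·(M − E))⁻¹. Then 1 + D·W and 1 − D·W_f are units of R[[D]], and W_f · (1 + D·W) = W and W · (1 − D·W_f) = W_f; equivalently, W_f = W/(1 + W·D) and W = W_f/(1 − W_f·D). (Here W is the total weight generating function W_C(y,D) of a convolutional code and W_f is the free-distance generating function W_{C_free}(y,D) of its fundamental paths, upon taking R = ℂ[y] and M the weight adjacency matrix Λ(y).) -/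

import Mathlib

/-!
STATEMENT 14: Let `W` be the `(s₀,s₀)` entry of `(I − D·M)⁻¹` and `W_f` the
`(s₀,s₀)` entry of `(I − D·(M − E))⁻¹`, where `E` is the matrix with a single
`1` in position `(s₀,s₀)`. Then `1 + D·W` and `1 − D·W_f` are units of
`R[[D]]`, with `W_f·(1 + D·W) = W` and `W·(1 − D·W_f) = W_f`.
-/

noncomputable section

/-- The matrix `I − D·N` over `R[[D]]` associated with a matrix `N` over `R`. -/
def oneSubDM (R : Type) [CommRing R] (S : Type) [Fintype S] [DecidableEq S]
    (N : Matrix S S R) : Matrix S S (PowerSeries R) :=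
  1 - (PowerSeries.X : PowerSeries R) • N.map (PowerSeries.C : R →+* PowerSeries R)

/-- `W`: the `(s₀,s₀)` entry of `(I − D·M)⁻¹`. -/
def Wtot (R : Type) [CommRing R] (S : Type) [Fintype S] [DecidableEq S]
    (M : Matrix S S R) (s₀ : S) : PowerSeries R :=
  (oneSubDM R S M)⁻¹ s₀ s₀

/-- `W_f`: the `(s₀,s₀)` entry of `(I − D·(M − E))⁻¹`. -/
def Wfree (R : Type) [CommRing R] (S : Type) [Fintype S] [DecidableEq S]
    (M : Matrix S S R) (s₀ : S) : PowerSeries R :=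
  (oneSubDM R S (M - Matrix.single s₀ s₀ 1))⁻¹ s₀ s₀

lemma oneSubDM_det_isUnit (R : Type) [CommRing R] (S : Type) [Fintype S] [DecidableEq S]
    (N : Matrix S S R) : IsUnit (oneSubDM R S N).det := by
  rw [PowerSeries.isUnit_iff_constantCoeff, RingHom.map_det]
  have : (PowerSeries.constantCoeff).mapMatrix (oneSubDM R S N) = 1 := by
    ext i j
    simp [oneSubDM, RingHom.mapMatrix_apply, Matrix.map_apply, Matrix.one_apply, Matrix.sub_apply,
      Matrix.smul_apply]
  rw [this, Matrix.det_one]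
  exact isUnit_one

lemma sandwich_entry (R : Type) [CommRing R] (S : Type) [Fintype S] [DecidableEq S]
    (P Q : Matrix S S (PowerSeries R)) (s₀ : S) :
    (P * Matrix.single s₀ s₀ (1 : PowerSeries R) * Q) s₀ s₀ = P s₀ s₀ * Q s₀ s₀ := by
  rw [Matrix.mul_assoc, Matrix.mul_apply]
  rw [Finset.sum_eq_single s₀]
  · simp
  · intro b _ hb
    rw [Matrix.single_mul_apply_of_ne _ _ _ _ _ hb, mul_zero]
  · intro h; exact absurd (Finset.mem_univ s₀) h

theorem stmt14 (R : Type) [CommRing R] (S : Type) [Fintype S] [DecidableEq S]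
    (M : Matrix S S R) (s₀ : S) :
    IsUnit (1 + PowerSeries.X * Wtot R S M s₀)
      ∧ IsUnit (1 - PowerSeries.X * Wfree R S M s₀)
      ∧ Wfree R S M s₀ * (1 + PowerSeries.X * Wtot R S M s₀) = Wtot R S M s₀
      ∧ Wtot R S M s₀ * (1 - PowerSeries.X * Wfree R S M s₀) = Wfree R S M s₀ := by
  set A := oneSubDM R S M with hA
  set B := oneSubDM R S (M - Matrix.single s₀ s₀ 1) with hB
  have hAdet := oneSubDM_det_isUnit R S M
  have hBdet := oneSubDM_det_isUnit R S (M - Matrix.single s₀ s₀ 1)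
  have hmap : (Matrix.single s₀ s₀ (1 : R)).map (PowerSeries.C)
      = Matrix.single s₀ s₀ (1 : PowerSeries R) := by
    ext i j
    simp only [Matrix.map_apply, Matrix.single, Matrix.of_apply]
    split <;> simp
  have hBA : B - A = (PowerSeries.X : PowerSeries R) • Matrix.single s₀ s₀ (1 : PowerSeries R) := by
    have hsub : (M - Matrix.single s₀ s₀ 1).map (PowerSeries.C)
        = M.map (PowerSeries.C) - (Matrix.single s₀ s₀ (1 : R)).map (PowerSeries.C) := by
      ext i j : 1; simp [Matrix.map_apply, Matrix.sub_apply, Matrix.single_apply, apply_ite PowerSeries.C]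
    rw [hB, hA, oneSubDM, oneSubDM, hsub, hmap, smul_sub]
    abel
  -- key identity: A⁻¹ - B⁻¹ = A⁻¹ (B - A) B⁻¹
  have key : A⁻¹ - B⁻¹ = A⁻¹ * (B - A) * B⁻¹ := by
    rw [Matrix.mul_sub, Matrix.sub_mul, Matrix.mul_assoc,
      Matrix.mul_nonsing_inv _ hBdet, Matrix.nonsing_inv_mul _ hAdet,
      Matrix.mul_one, Matrix.one_mul]
  have keyE : Wtot R S M s₀ - Wfree R S M s₀
      = PowerSeries.X * (Wtot R S M s₀ * Wfree R S M s₀) := by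
    have := congrArg (fun N : Matrix S S (PowerSeries R) => N s₀ s₀) key
    simp only [Matrix.sub_apply] at this
    rw [hBA] at this
    have h2 : A⁻¹ * ((PowerSeries.X : PowerSeries R) • Matrix.single s₀ s₀ (1 : PowerSeries R)) * B⁻¹
        = (PowerSeries.X : PowerSeries R) • (A⁻¹ * Matrix.single s₀ s₀ (1 : PowerSeries R) * B⁻¹) := by
      rw [Matrix.mul_smul, Matrix.smul_mul]
    rw [h2, Matrix.smul_apply, sandwich_entry] at this
    simpa [Wtot, Wfree, smul_eq_mul, mul_assoc] using this
  have hWconst : (PowerSeries.constantCoeff) (1 + PowerSeries.X * Wtot R S M s₀) = 1 := by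
    simp
  have hWfconst : (PowerSeries.constantCoeff) (1 - PowerSeries.X * Wfree R S M s₀) = 1 := by
    simp
  refine ⟨?_, ?_, ?_, ?_⟩
  · rw [PowerSeries.isUnit_iff_constantCoeff, hWconst]; exact isUnit_one
  · rw [PowerSeries.isUnit_iff_constantCoeff, hWfconst]; exact isUnit_one
  · linear_combination -keyE
  · linear_combination keyE
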